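/- Super-approximation property of the temporal L² projection (Lemma 3.4): let X be a complex Hilbert space, k ≥ 1 an integer, I = [a, a+τ] with 0 < τ ≤ 1, and let w : I → B(X) be a k-times continuously differentiable map into the bounded linear operators on X. Then there exists a constant C depending only on k and on max_{0≤j≤k} sup_{t∈I} ‖w^{(j)}(t)‖_{B(X)} (independent of τ and v) such that for every X-valued polynomial v of degree ≤ k−1, the function (wv)(t) := w(t)v(t) satisfies ‖wv − P(wv)‖_{L²(I;X)} ≤ C·τ·‖v‖_{L²(I;X)}, where ‖f‖_{L²(I;X)} := (∫_I ‖f(t)‖² dt)^{1/2}. (In the paper, w(t) is the operator of pointwise multiplication by a smooth function, acting on X = H^s(Ω) or X = ℝ.) -/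

import Mathlib

/-!
Super-approximation property of the temporal L² projection (Lemma 3.4):
for `w : I → B(X)` k-times continuously differentiable and `v` an `X`-valued polynomial
of degree ≤ k-1, ‖wv − P(wv)‖_{L²(I;X)} ≤ C τ ‖v‖_{L²(I;X)}, where C depends only on k
and on max_{0≤j≤k} sup_{t∈I} ‖w^{(j)}(t)‖_{B(X)}.
-/

open MeasureTheory

universe u

/-- `f : ℝ → X` is an `X`-valued polynomial of degree at most `m`. -/
def IsPolyDeg (X : Type*) [AddCommGroup X] [Module ℝ X] (m : ℕ) (f : ℝ → X) : Prop :=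
  ∃ φ : Fin (m + 1) → X, ∀ t : ℝ, f t = ∑ i : Fin (m + 1), t ^ (i : ℕ) • φ i

/-- `p` is the L²(a,b)-orthogonal projection of `u` onto `X`-valued polynomials of
degree ≤ k-1. -/
def IsL2ProjOn (X : Type*) [NormedAddCommGroup X] [InnerProductSpace ℂ X]
    (a b : ℝ) (k : ℕ) (u p : ℝ → X) : Prop :=
  IsPolyDeg X (k - 1) p ∧
    ∀ χ : ℝ → X, IsPolyDeg X (k - 1) χ →
      (∫ t in a..b, (inner ℂ (u t - p t) (χ t) : ℂ)) = 0

lemma IsPolyDeg.sub' {X : Type*} [AddCommGroup X] [Module ℝ X] {m : ℕ} {f g : ℝ → X}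
    (hf : IsPolyDeg X m f) (hg : IsPolyDeg X m g) :
    IsPolyDeg X m (fun t => f t - g t) := by
  obtain ⟨φ, hφ⟩ := hf; obtain ⟨ψ, hψ⟩ := hg
  exact ⟨fun i => φ i - ψ i, fun t => by simp [hφ, hψ, smul_sub, Finset.sum_sub_distrib]⟩

lemma IsPolyDeg.continuous' {X : Type*} [NormedAddCommGroup X] [NormedSpace ℝ X]
    {m : ℕ} {f : ℝ → X} (hf : IsPolyDeg X m f) : Continuous f := by
  obtain ⟨φ, hφ⟩ := hf
  have : Continuous fun t : ℝ => ∑ i : Fin (m + 1), t ^ (i : ℕ) • φ i :=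
    continuous_finset_sum _ fun i _ => (continuous_pow _).smul continuous_const
  exact this.congr fun t => (hφ t).symm

theorem l2proj_superapproximation (k : ℕ) (hk : 1 ≤ k) (M : ℝ) :
    -- C depends only on k and on the bound M for max_{0≤j≤k} sup_{t∈I} ‖w^{(j)}(t)‖
    ∃ C : ℝ, 0 < C ∧
      -- X : a complex Hilbert space
      ∀ (X : Type u) [NormedAddCommGroup X] [InnerProductSpace ℂ X] [CompleteSpace X],
      ∀ (a τ : ℝ), 0 < τ → τ ≤ 1 →
      -- w : a k-times continuously differentiable map into bounded linear operators on X
      ∀ w : ℝ → X →L[ℂ] X, ContDiff ℝ k w →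
        (∀ j ≤ k, ∀ t ∈ Set.Icc a (a + τ), ‖iteratedDeriv j w t‖ ≤ M) →
      -- v : an X-valued polynomial of degree ≤ k-1
      ∀ v : ℝ → X, IsPolyDeg X (k - 1) v →
      ∀ p : ℝ → X, IsL2ProjOn X a (a + τ) k (fun t => w t (v t)) p →
        Real.sqrt (∫ t in a..(a + τ), ‖w t (v t) - p t‖ ^ 2)
          ≤ C * τ * Real.sqrt (∫ t in a..(a + τ), ‖v t‖ ^ 2) := by
  refine ⟨|M| + 1, by positivity, ?_⟩
  intro X _ _ _ a τ hτ hτ1 w hw hwM v hv p hp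
  obtain ⟨hppoly, horth⟩ := hp
  have hab : a ≤ a + τ := by linarith
  have haI : a ∈ Set.Icc a (a + τ) := ⟨le_refl _, hab⟩
  -- M is nonnegative
  have hM0 : 0 ≤ M := (norm_nonneg _).trans (by simpa using hwM 0 (Nat.zero_le _) a haI)
  -- the comparison polynomial q
  set q : ℝ → X := fun t => w a (v t) with hq
  have hqpoly : IsPolyDeg X (k - 1) q := by
    obtain ⟨φ, hφ⟩ := hv
    exact ⟨fun i => w a (φ i), fun t => by
      simp [hq, hφ t, map_sum, (w a).map_smul_of_tower]⟩
  set u : ℝ → X := fun t => w t (v t) with hu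
  -- continuity
  have hvc : Continuous v := hv.continuous'
  have hpc : Continuous p := hppoly.continuous'
  have hqc : Continuous q := hqpoly.continuous'
  have huc : Continuous u := hw.continuous.clm_apply hvc
  -- mean value bound: ‖w t - w a‖ ≤ M * τ on the interval
  have hderiv : ∀ t ∈ Set.Icc a (a + τ),
      HasDerivWithinAt w (deriv w t) (Set.Icc a (a + τ)) t := fun t _ =>
    ((hw.differentiable (by exact_mod_cast (show k ≠ 0 by omega))) t).hasDerivAt.hasDerivWithinAt
  have hdbound : ∀ t ∈ Set.Icc a (a + τ), ‖deriv w t‖ ≤ M := by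
    intro t ht
    have := hwM 1 hk t ht
    rwa [iteratedDeriv_one] at this
  have hwdiff : ∀ t ∈ Set.Icc a (a + τ), ‖w t - w a‖ ≤ M * τ := by
    intro t ht
    have h1 : ‖w t - w a‖ ≤ M * ‖t - a‖ :=
      (convex_Icc a (a + τ)).norm_image_sub_le_of_norm_hasDerivWithin_le
        hderiv hdbound haI ht
    have h2 : ‖t - a‖ ≤ τ := by
      rw [Real.norm_eq_abs, abs_sub_le_iff]
      constructor <;> [linarith [ht.2]; linarith [ht.1]]
    calc ‖w t - w a‖ ≤ M * ‖t - a‖ := h1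
      _ ≤ M * τ := by nlinarith [norm_nonneg (t - a)]
  -- pointwise bound on u - q
  have hptwise : ∀ t ∈ Set.Icc a (a + τ), ‖u t - q t‖ ^ 2 ≤ (M * τ) ^ 2 * ‖v t‖ ^ 2 := by
    intro t ht
    have h1 : ‖u t - q t‖ = ‖(w t - w a) (v t)‖ := by
      simp [hu, hq, ContinuousLinearMap.sub_apply]
    have h2 : ‖(w t - w a) (v t)‖ ≤ ‖w t - w a‖ * ‖v t‖ := (w t - w a).le_opNorm _
    have h3 : ‖u t - q t‖ ≤ (M * τ) * ‖v t‖ := by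
      rw [h1]
      calc ‖(w t - w a) (v t)‖ ≤ ‖w t - w a‖ * ‖v t‖ := h2
        _ ≤ (M * τ) * ‖v t‖ := by
            exact mul_le_mul_of_nonneg_right (hwdiff t ht) (norm_nonneg _)
    calc ‖u t - q t‖ ^ 2 ≤ ((M * τ) * ‖v t‖) ^ 2 := by
          exact pow_le_pow_left₀ (norm_nonneg _) h3 2
      _ = (M * τ) ^ 2 * ‖v t‖ ^ 2 := by ring
  -- integrability
  have hiuq : IntervalIntegrable (fun t => ‖u t - q t‖ ^ 2) volume a (a + τ) :=
    (((huc.sub hqc).norm.pow 2)).intervalIntegrable a (a + τ)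
  have hiup : IntervalIntegrable (fun t => ‖u t - p t‖ ^ 2) volume a (a + τ) :=
    (((huc.sub hpc).norm.pow 2)).intervalIntegrable a (a + τ)
  have hipq : IntervalIntegrable (fun t => ‖p t - q t‖ ^ 2) volume a (a + τ) :=
    (((hpc.sub hqc).norm.pow 2)).intervalIntegrable a (a + τ)
  have hiv : IntervalIntegrable (fun t => (M * τ) ^ 2 * ‖v t‖ ^ 2) volume a (a + τ) :=
    ((continuous_const.mul (hvc.norm.pow 2))).intervalIntegrable a (a + τ)
  have hiinner : IntervalIntegrable (fun t => (inner ℂ (u t - p t) (p t - q t) : ℂ))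
      volume a (a + τ) :=
    (Continuous.inner (huc.sub hpc) (hpc.sub hqc)).intervalIntegrable a (a + τ)
  -- best approximation: ∫‖u-p‖² ≤ ∫‖u-q‖²
  have hcross : (∫ t in a..(a + τ), (inner ℂ (u t - p t) (p t - q t) : ℂ)) = 0 :=
    horth _ (hppoly.sub' hqpoly)
  have hexpand : ∀ t : ℝ, ‖u t - q t‖ ^ 2
      = ‖u t - p t‖ ^ 2 + 2 * Complex.re (inner ℂ (u t - p t) (p t - q t) : ℂ)
        + ‖p t - q t‖ ^ 2 := by
    intro t
    have : u t - q t = (u t - p t) + (p t - q t) := by abel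
    rw [this]
    exact norm_add_sq (𝕜 := ℂ) _ _
  have hre : (∫ t in a..(a + τ), Complex.re (inner ℂ (u t - p t) (p t - q t) : ℂ)) = 0 := by
    have := Complex.reCLM.intervalIntegral_comp_comm hiinner (a := a) (b := a + τ)
    rw [hcross] at this
    simpa using this
  have hirec : IntervalIntegrable
      (fun t => Complex.re (inner ℂ (u t - p t) (p t - q t) : ℂ)) volume a (a + τ) :=
    (Complex.continuous_re.comp
      (Continuous.inner (huc.sub hpc) (hpc.sub hqc))).intervalIntegrable a (a + τ)
  have hbest : (∫ t in a..(a + τ), ‖u t - p t‖ ^ 2)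
      ≤ (∫ t in a..(a + τ), ‖u t - q t‖ ^ 2) := by
    have heq : (∫ t in a..(a + τ), ‖u t - q t‖ ^ 2)
        = (∫ t in a..(a + τ), ‖u t - p t‖ ^ 2)
          + (∫ t in a..(a + τ), 2 * Complex.re (inner ℂ (u t - p t) (p t - q t) : ℂ))
          + (∫ t in a..(a + τ), ‖p t - q t‖ ^ 2) := by
      simp_rw [hexpand]
      rw [intervalIntegral.integral_add (hiup.add (hirec.const_mul 2)) hipq,
          intervalIntegral.integral_add hiup (hirec.const_mul 2)]
    have hzero : (∫ t in a..(a + τ), 2 * Complex.re (inner ℂ (u t - p t) (p t - q t) : ℂ)) = 0 := by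
      rw [intervalIntegral.integral_const_mul, hre, mul_zero]
    have hnn : 0 ≤ (∫ t in a..(a + τ), ‖p t - q t‖ ^ 2) :=
      intervalIntegral.integral_nonneg hab (fun t _ => sq_nonneg _)
    rw [heq, hzero]
    linarith
  have hmono : (∫ t in a..(a + τ), ‖u t - q t‖ ^ 2)
      ≤ (∫ t in a..(a + τ), (M * τ) ^ 2 * ‖v t‖ ^ 2) :=
    intervalIntegral.integral_mono_on hab hiuq hiv hptwise
  have hconst : (∫ t in a..(a + τ), (M * τ) ^ 2 * ‖v t‖ ^ 2)
      = (M * τ) ^ 2 * (∫ t in a..(a + τ), ‖v t‖ ^ 2) :=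
    intervalIntegral.integral_const_mul _ _
  have hsqrt : Real.sqrt (∫ t in a..(a + τ), ‖u t - p t‖ ^ 2)
      ≤ (M * τ) * Real.sqrt (∫ t in a..(a + τ), ‖v t‖ ^ 2) := by
    have h1 : Real.sqrt (∫ t in a..(a + τ), ‖u t - p t‖ ^ 2)
        ≤ Real.sqrt ((M * τ) ^ 2 * (∫ t in a..(a + τ), ‖v t‖ ^ 2)) := by
      apply Real.sqrt_le_sqrt
      rw [← hconst]
      exact hbest.trans hmono
    rwa [Real.sqrt_mul (sq_nonneg _), Real.sqrt_sq_eq_abs,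
      abs_of_nonneg (by positivity : (0:ℝ) ≤ M * τ)] at h1
  calc Real.sqrt (∫ t in a..(a + τ), ‖w t (v t) - p t‖ ^ 2)
      ≤ (M * τ) * Real.sqrt (∫ t in a..(a + τ), ‖v t‖ ^ 2) := hsqrt
    _ ≤ (|M| + 1) * τ * Real.sqrt (∫ t in a..(a + τ), ‖v t‖ ^ 2) := by
        have h := Real.sqrt_nonneg (∫ t in a..(a + τ), ‖v t‖ ^ 2)
        rw [abs_of_nonneg hM0]
        nlinarith
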